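/- Frobenius discrepancy change identity for the rank-one GROUSE update: Let 0 < d < n, let Ū and U_t be n×d matrices with orthonormal columns, let x ∈ ℝⁿ, and set w = U_tᵀ x, p = U_t w, r = x − p, assuming w ≠ 0, p ≠ 0, r ≠ 0. For any angle θ, let u = cos(θ) p/‖p‖ + sin(θ) r/‖r‖ and U_{t+1} = U_t + (u − p/‖p‖) wᵀ/‖w‖. Then ‖Ūᵀ U_{t+1}‖_F² − ‖Ūᵀ U_t‖_F² = ‖Ū Ūᵀ u‖² − ‖Ū Ūᵀ p‖²/‖p‖²; equivalently, ε_t − ε_{t+1} = ‖Ū Ūᵀ y‖²/‖y‖² − ‖Ū Ūᵀ p‖²/‖p‖² for any y with y/‖y‖ = u, where ε_t := d − ‖Ūᵀ U_t‖_F². -/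
import Mathlib


open Matrix

noncomputable def vnorm {m : Type*} [Fintype m] (x : m → ℝ) : ℝ :=
  Real.sqrt (∑ i, x i ^ 2)

/-- `U` has orthonormal columns. -/
def OrthonormalCols {n d : ℕ} (U : Matrix (Fin n) (Fin d) ℝ) : Prop :=
  Uᵀ * U = 1

set_option linter.unusedSectionVars false

lemma vnorm_sq' {m : Type*} [Fintype m] (x : m → ℝ) : vnorm x ^ 2 = ∑ i, x i ^ 2 := by
  rw [vnorm, Real.sq_sqrt]; positivity

lemma vnorm_pos' {m : Type*} [Fintype m] {x : m → ℝ} (hx : x ≠ 0) : 0 < vnorm x := by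
  rw [vnorm]
  apply Real.sqrt_pos.mpr
  obtain ⟨i, hi⟩ := Function.ne_iff.mp hx
  exact Finset.sum_pos' (fun j _ => sq_nonneg _) ⟨i, Finset.mem_univ i, lt_of_le_of_ne (sq_nonneg _) (Ne.symm (pow_ne_zero 2 hi))⟩

lemma dot_self_eq_sum_sq {m : Type*} [Fintype m] (x : m → ℝ) : x ⬝ᵥ x = ∑ i, x i ^ 2 := by
  simp [dotProduct, sq]

section core
variable {n d : ℕ} (Ub : Matrix (Fin n) (Fin d) ℝ)

noncomputable def Pj (z : Fin n → ℝ) : Fin n → ℝ := Ub *ᵥ (Ubᵀ *ᵥ z)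

variable (hUb : OrthonormalCols Ub)
include hUb

omit hUb in
lemma hadj (v z : Fin n → ℝ) : v ⬝ᵥ Pj Ub z = (Ubᵀ *ᵥ v) ⬝ᵥ (Ubᵀ *ᵥ z) := by
  simp only [Pj, Matrix.dotProduct_mulVec, Matrix.mulVec_transpose]

lemma hsym (v z : Fin n → ℝ) : v ⬝ᵥ Pj Ub z = z ⬝ᵥ Pj Ub v := by
  rw [hadj Ub, hadj Ub, dotProduct_comm]

lemma hUbid (z : Fin d → ℝ) : Ubᵀ *ᵥ (Ub *ᵥ z) = z := by
  rw [Matrix.mulVec_mulVec, show Ubᵀ * Ub = 1 from hUb, Matrix.one_mulVec]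

lemma hPidem (z : Fin n → ℝ) : Pj Ub (Pj Ub z) = Pj Ub z := by
  simp only [Pj]; rw [hUbid Ub hUb]

lemma hnormP (z : Fin n → ℝ) : vnorm (Ub *ᵥ (Ubᵀ *ᵥ z)) ^ 2 = z ⬝ᵥ Pj Ub z := by
  rw [vnorm_sq', ← dot_self_eq_sum_sq]
  have h1 : Ub *ᵥ (Ubᵀ *ᵥ z) = Pj Ub z := rfl
  rw [h1]
  calc Pj Ub z ⬝ᵥ Pj Ub z = z ⬝ᵥ Pj Ub (Pj Ub z) := hsym Ub hUb _ _
    _ = z ⬝ᵥ Pj Ub z := by rw [hPidem Ub hUb]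

end core

lemma core {n d : ℕ} (Ub U : Matrix (Fin n) (Fin d) ℝ)
    (hUb : OrthonormalCols Ub) (hU : OrthonormalCols U)
    (w : Fin d → ℝ) (p : Fin n → ℝ) (hp : p = U *ᵥ w) (hwne : w ≠ 0)
    (u : Fin n → ℝ) (Unext : Matrix (Fin n) (Fin d) ℝ)
    (hUnext : Unext = U + Matrix.of (fun i j => (u i - p i / vnorm p) * (w j / vnorm w))) :
    (∑ i, ∑ j, ((Ubᵀ * Unext) i j) ^ 2) - ∑ i, ∑ j, ((Ubᵀ * U) i j) ^ 2
      = vnorm (Ub *ᵥ (Ubᵀ *ᵥ u)) ^ 2 - vnorm (Ub *ᵥ (Ubᵀ *ᵥ p)) ^ 2 / vnorm p ^ 2 := by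
  set np := vnorm p with hnpdef
  set nw := vnorm w with hnwdef
  have hnwpos : 0 < nw := vnorm_pos' hwne
  -- ‖p‖ = ‖w‖
  have hpw : ∑ i, p i ^ 2 = ∑ j, w j ^ 2 := by
    rw [← dot_self_eq_sum_sq, ← dot_self_eq_sum_sq, hp, Matrix.dotProduct_mulVec,
      ← Matrix.mulVec_transpose, hUbid U hU]
  have hnp_nw : np = nw := by rw [hnpdef, hnwdef, vnorm, vnorm, hpw]
  have hnppos : 0 < np := hnp_nw ▸ hnwpos
  set v : Fin n → ℝ := fun i => u i - p i / np with hvdef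
  set a : Fin d → ℝ := Ubᵀ *ᵥ v with hadef
  set b : Fin d → ℝ := fun j => w j / nw with hbdef
  have hentry : ∀ i j, (Ubᵀ * Unext) i j = (Ubᵀ * U) i j + a i * b j := by
    intro i j
    rw [hUnext, Matrix.mul_add, Matrix.add_apply]
    congr 1
    simp only [Matrix.mul_apply, Matrix.transpose_apply, Matrix.of_apply, hadef,
      Matrix.mulVec, dotProduct, hbdef, Finset.sum_mul]
    exact Finset.sum_congr rfl fun k _ => by ring
  have hb2 : ∑ j, b j ^ 2 = 1 := by
    simp only [hbdef, div_pow, ← Finset.sum_div]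
    rw [← vnorm_sq', ← hnwdef, div_self (by positivity)]
  have key : ∑ i, ∑ j, ((Ubᵀ * Unext) i j) ^ 2
      = (∑ i, ∑ j, ((Ubᵀ * U) i j) ^ 2)
        + (2 * (a ⬝ᵥ ((Ubᵀ * U) *ᵥ b)) + (a ⬝ᵥ a) * (∑ j, b j ^ 2)) := by
    simp_rw [hentry]
    have hrow : ∀ i, ∑ j, ((Ubᵀ * U) i j + a i * b j) ^ 2
        = (∑ j, ((Ubᵀ * U) i j) ^ 2)
          + (2 * (a i * ∑ j, (Ubᵀ * U) i j * b j) + a i * a i * ∑ j, b j ^ 2) := by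
      intro i
      have h1 : ∀ j, ((Ubᵀ * U) i j + a i * b j) ^ 2
          = ((Ubᵀ * U) i j) ^ 2 + (2 * (a i * ((Ubᵀ * U) i j * b j)) + a i * a i * b j ^ 2) :=
        fun j => by ring
      simp_rw [h1, Finset.sum_add_distrib, ← Finset.mul_sum]
    simp_rw [hrow, Finset.sum_add_distrib]
    congr 1
    rw [dotProduct, dotProduct, Finset.mul_sum, Finset.sum_mul]
    congr 1
  -- scalar abbreviations
  set α := u ⬝ᵥ Pj Ub u with hα
  set β := u ⬝ᵥ Pj Ub p with hβ
  set γ := p ⬝ᵥ Pj Ub p with hγ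
  have hv_eq : v = u - np⁻¹ • p := by
    funext i
    simp [hvdef, Pi.sub_apply, Pi.smul_apply, smul_eq_mul, div_eq_inv_mul]
  -- first dot product
  have hUb_eq : U *ᵥ b = nw⁻¹ • p := by
    funext i
    simp only [hbdef, Matrix.mulVec, dotProduct, Pi.smul_apply, smul_eq_mul, hp,
      div_eq_mul_inv]
    rw [Finset.mul_sum]
    exact Finset.sum_congr rfl fun x _ => by ring
  have hdot1 : a ⬝ᵥ ((Ubᵀ * U) *ᵥ b) = nw⁻¹ * (β - np⁻¹ * γ) := by
    rw [← Matrix.mulVec_mulVec, hUb_eq, hadef, ← hadj Ub]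
    have hsm : Pj Ub (nw⁻¹ • p) = nw⁻¹ • Pj Ub p := by
      simp [Pj, Matrix.mulVec_smul]
    rw [hsm, dotProduct_smul, smul_eq_mul]
    congr 1
    rw [hv_eq, sub_dotProduct, smul_dotProduct, smul_eq_mul, ← hβ, ← hγ]
  have hdot2 : a ⬝ᵥ a = α - 2 * np⁻¹ * β + np⁻¹ ^ 2 * γ := by
    rw [hadef, ← hadj Ub]
    have hPv : Pj Ub v = Pj Ub u - np⁻¹ • Pj Ub p := by
      rw [hv_eq]
      simp [Pj, Matrix.mulVec_sub, Matrix.mulVec_smul]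
    rw [hPv, hv_eq]
    have hba : p ⬝ᵥ Pj Ub u = β := (hsym Ub hUb p u).symm ▸ rfl
    simp only [sub_dotProduct, dotProduct_sub, smul_dotProduct,
      dotProduct_smul, smul_eq_mul, ← hα, ← hβ, ← hγ]
    rw [hba]
    ring
  rw [key, hdot1, hdot2, hb2, hnormP Ub hUb u, hnormP Ub hUb p, ← hα, ← hγ, ← hnp_nw]
  have h0 : np ≠ 0 := ne_of_gt hnppos
  field_simp
  ring


/-- Frobenius norm discrepancy `ε = d − ‖Ūᵀ U‖_F²`. -/
noncomputable def epsDisc {n d : ℕ} (Ub U : Matrix (Fin n) (Fin d) ℝ) : ℝ :=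
  (d : ℝ) - ∑ i, ∑ j, ((Ubᵀ * U) i j) ^ 2

/-- **Frobenius discrepancy change identity for the rank-one GROUSE update.**
With `w = Uᵀ x ≠ 0`, `p = U w ≠ 0`, `r = x − p ≠ 0`, any angle `θ`,
`u = cos θ · p/‖p‖ + sin θ · r/‖r‖`, and
`U⁺ = U + (u − p/‖p‖) wᵀ/‖w‖`, we have
`‖Ūᵀ U⁺‖_F² − ‖Ūᵀ U‖_F² = ‖Ū Ūᵀ u‖² − ‖Ū Ūᵀ p‖²/‖p‖²`; equivalently
`ε_t − ε_{t+1} = ‖Ū Ūᵀ y‖²/‖y‖² − ‖Ū Ūᵀ p‖²/‖p‖²` for any `y ≠ 0` with `y/‖y‖ = u`. -/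
theorem eps_change_identity {n d : ℕ} (hd : 0 < d) (hdn : d < n)
    (Ub U : Matrix (Fin n) (Fin d) ℝ)
    (hUb : OrthonormalCols Ub) (hU : OrthonormalCols U)
    (x : Fin n → ℝ) (w : Fin d → ℝ) (p r : Fin n → ℝ)
    (hw : w = Uᵀ *ᵥ x) (hp : p = U *ᵥ w) (hr : r = x - p)
    (hwne : w ≠ 0) (hpne : p ≠ 0) (hrne : r ≠ 0)
    (θ : ℝ) (u : Fin n → ℝ)
    (hu : u = fun i => Real.cos θ * (p i / vnorm p) + Real.sin θ * (r i / vnorm r))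
    (Unext : Matrix (Fin n) (Fin d) ℝ)
    (hUnext : Unext = U + Matrix.of (fun i j => (u i - p i / vnorm p) * (w j / vnorm w))) :
    ((∑ i, ∑ j, ((Ubᵀ * Unext) i j) ^ 2) - ∑ i, ∑ j, ((Ubᵀ * U) i j) ^ 2
      = vnorm (Ub *ᵥ (Ubᵀ *ᵥ u)) ^ 2 - vnorm (Ub *ᵥ (Ubᵀ *ᵥ p)) ^ 2 / vnorm p ^ 2) ∧
    (∀ y : Fin n → ℝ, y ≠ 0 → (fun i => y i / vnorm y) = u →
      epsDisc Ub U - epsDisc Ub Unext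
        = vnorm (Ub *ᵥ (Ubᵀ *ᵥ y)) ^ 2 / vnorm y ^ 2
          - vnorm (Ub *ᵥ (Ubᵀ *ᵥ p)) ^ 2 / vnorm p ^ 2) := by
  have h1 := core Ub U hUb hU w p hp hwne u Unext hUnext
  refine ⟨h1, ?_⟩
  intro y hy hyu
  have hny : 0 < vnorm y := vnorm_pos' hy
  have h2 : epsDisc Ub U - epsDisc Ub Unext
      = (∑ i, ∑ j, ((Ubᵀ * Unext) i j) ^ 2) - ∑ i, ∑ j, ((Ubᵀ * U) i j) ^ 2 := by
    simp only [epsDisc]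
    ring
  rw [h2, h1]
  congr 1
  have hu_eq : u = (vnorm y)⁻¹ • y := by
    rw [← hyu]; funext i; simp [div_eq_inv_mul]
  rw [hu_eq, Matrix.mulVec_smul, Matrix.mulVec_smul, vnorm_sq', vnorm_sq']
  simp only [Pi.smul_apply, smul_eq_mul, mul_pow]
  rw [← Finset.mul_sum]
  have h0 : vnorm y ≠ 0 := ne_of_gt hny
  field_simp
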